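/- For every p ∈ [2, ∞) and every x ∈ (0, π_p/2), one has (x / sinh_p(x))^p < sin_p(x) / x < x / sinh_p(x). -/

import Mathlib

open Real Set Filter Topology MeasureTheory intervalIntegral

/-- Generalized inverse sine: `arcsinp p x = ∫₀ˣ (1 - tᵖ)^(-1/p) dt`. -/
noncomputable def arcsinp (p x : ℝ) : ℝ := ∫ t in (0:ℝ)..x, (1 - t ^ p) ^ (-(1/p))

/-- The generalized half-pi: `π_p/2 = arcsin_p 1`. -/
noncomputable def pipHalf (p : ℝ) : ℝ := arcsinp p 1

/-- Generalized sine: the inverse of `arcsinp p` viewed as a map on `[0,1]`. -/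
noncomputable def sinp (p : ℝ) : ℝ → ℝ := Function.invFunOn (arcsinp p) (Set.Icc 0 1)

/-- Generalized cosine. -/
noncomputable def cosp (p x : ℝ) : ℝ := (1 - (sinp p x) ^ p) ^ (1/p : ℝ)

/-- Generalized tangent. -/
noncomputable def tanp (p x : ℝ) : ℝ := sinp p x / cosp p x

/-- Generalized inverse hyperbolic sine: `arsinhp p x = ∫₀ˣ (1 + tᵖ)^(-1/p) dt`. -/
noncomputable def arsinhp (p x : ℝ) : ℝ := ∫ t in (0:ℝ)..x, (1 + t ^ p) ^ (-(1/p))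

/-- Generalized hyperbolic sine: the inverse of `arsinhp p` viewed as a map on `[0,∞)`. -/
noncomputable def sinhp (p : ℝ) : ℝ → ℝ := Function.invFunOn (arsinhp p) (Set.Ici 0)

/-- Generalized hyperbolic cosine. -/
noncomputable def coshp (p x : ℝ) : ℝ := (1 + (sinhp p x) ^ p) ^ (1/p : ℝ)

/-- Generalized hyperbolic tangent. -/
noncomputable def tanhp (p x : ℝ) : ℝ := sinhp p x / coshp p x

section Lemmas

variable {p : ℝ}

private lemma p_pos (hp : 2 ≤ p) : 0 < p := by linarith

private lemma p_ne (hp : 2 ≤ p) : p ≠ 0 := (p_pos hp).ne'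

private lemma ip_pos (hp : 2 ≤ p) : 0 < 1/p := by
  have := p_pos hp; positivity

private lemma ip_lt_one (hp : 2 ≤ p) : 1/p < 1 := by
  rw [div_lt_one (p_pos hp)]; linarith

/-! ### the arcsin kernel -/

private lemma asker_base_pos (hp : 2 ≤ p) {t : ℝ} (h0 : 0 ≤ t) (h1 : t < 1) :
    0 < 1 - t ^ p := by
  have : t ^ p < 1 := rpow_lt_one h0 h1 (p_pos hp)
  linarith

private lemma asker_pos (hp : 2 ≤ p) {t : ℝ} (h0 : 0 ≤ t) (h1 : t < 1) :
    0 < (1 - t ^ p) ^ (-(1/p)) :=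
  rpow_pos_of_pos (asker_base_pos hp h0 h1) _

private lemma asker_contAt (hp : 2 ≤ p) {t : ℝ} (h0 : 0 ≤ t) (h1 : t < 1) :
    ContinuousAt (fun t : ℝ => (1 - t ^ p) ^ (-(1/p))) t := by
  have hbase : ContinuousAt (fun t : ℝ => 1 - t ^ p) t :=
    continuousAt_const.sub (continuous_rpow_const (p_pos hp).le).continuousAt
  exact hbase.rpow_const (Or.inl (asker_base_pos hp h0 h1).ne')

private lemma asker_integrable_01 (hp : 2 ≤ p) :
    IntervalIntegrable (fun t : ℝ => (1 - t ^ p) ^ (-(1/p))) volume 0 1 := by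
  have hr : (-1 : ℝ) < -(1/p) := by have := ip_lt_one hp; linarith
  have h2 : IntervalIntegrable (fun t : ℝ => (1 - t) ^ (-(1/p))) volume 0 1 := by
    have := (intervalIntegrable_rpow' (a := 0) (b := 1) hr).comp_sub_left 1
    simpa using this.symm
  apply h2.mono_fun
  · have hΙ : uIoc (0:ℝ) 1 = Ioc 0 1 := uIoc_of_le zero_le_one
    rw [hΙ, ← MeasureTheory.Measure.restrict_congr_set Ioo_ae_eq_Ioc]
    refine ContinuousOn.aestronglyMeasurable ?_ measurableSet_Ioo
    intro t ht
    exact (asker_contAt hp ht.1.le ht.2).continuousWithinAt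
  · rw [uIoc_of_le zero_le_one]
    refine (MeasureTheory.ae_restrict_iff' measurableSet_Ioc).mpr (Filter.Eventually.of_forall ?_)
    intro t ht
    have h0 : 0 < t := ht.1
    have h1 : t ≤ 1 := ht.2
    rcases eq_or_lt_of_le h1 with h | h
    · subst h
      simp [Real.one_rpow, Real.zero_rpow (by have := ip_pos hp; intro hh; rw [neg_eq_zero] at hh; linarith : -(1/p) ≠ (0:ℝ))]
    · have htp : t ^ p ≤ t := by
        have := rpow_le_rpow_of_exponent_ge h0 h1 (by linarith : (1:ℝ) ≤ p)
        rwa [rpow_one] at this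
      have hb1 : 0 < 1 - t := by linarith
      have hb2 : 1 - t ≤ 1 - t ^ p := by linarith
      have hle : (1 - t ^ p) ^ (-(1/p)) ≤ (1 - t) ^ (-(1/p)) :=
        rpow_le_rpow_of_nonpos hb1 hb2 (by have := ip_pos hp; linarith)
      have hn1 : 0 ≤ (1 - t ^ p) ^ (-(1/p)) := rpow_nonneg (by linarith) _
      have hn2 : 0 ≤ (1 - t) ^ (-(1/p)) := rpow_nonneg (by linarith) _
      simp only [Real.norm_eq_abs, abs_of_nonneg hn1, abs_of_nonneg hn2]
      exact hle

private lemma asker_integrable (hp : 2 ≤ p) {a b : ℝ} (ha : a ∈ Icc (0:ℝ) 1)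
    (hb : b ∈ Icc (0:ℝ) 1) :
    IntervalIntegrable (fun t : ℝ => (1 - t ^ p) ^ (-(1/p))) volume a b := by
  apply (asker_integrable_01 hp).mono_set
  rw [uIcc_of_le (zero_le_one : (0:ℝ) ≤ 1)]
  exact uIcc_subset_Icc ha hb

private lemma arcsinp_zero' : arcsinp p 0 = 0 := intervalIntegral.integral_same

private lemma arcsinp_add (hp : 2 ≤ p) {a b : ℝ} (ha : a ∈ Icc (0:ℝ) 1) (hb : b ∈ Icc (0:ℝ) 1) :
    arcsinp p a + (∫ t in a..b, (1 - t ^ p) ^ (-(1/p))) = arcsinp p b :=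
  integral_add_adjacent_intervals
    (asker_integrable hp ⟨le_rfl, zero_le_one⟩ ha) (asker_integrable hp ha hb)

private lemma arcsinp_strictMonoOn (hp : 2 ≤ p) : StrictMonoOn (arcsinp p) (Icc 0 1) := by
  intro a ha b hb hab
  have hpos : 0 < ∫ t in a..b, (1 - t ^ p) ^ (-(1/p)) := by
    apply intervalIntegral_pos_of_pos_on (asker_integrable hp ha hb) _ hab
    intro t ht
    exact asker_pos hp (le_of_lt (lt_of_le_of_lt ha.1 ht.1)) (lt_of_lt_of_le ht.2 hb.2)
  have := arcsinp_add hp ha hb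
  linarith

private lemma arcsinp_continuousOn (hp : 2 ≤ p) : ContinuousOn (arcsinp p) (Icc 0 1) := by
  have h := intervalIntegral.continuousOn_primitive_interval (a := 0) (b := 1) (μ := volume)
    (f := fun t : ℝ => (1 - t ^ p) ^ (-(1/p))) ?_
  · rw [uIcc_of_le (zero_le_one : (0:ℝ) ≤ 1)] at h
    exact h
  · rw [uIcc_of_le (zero_le_one : (0:ℝ) ≤ 1)]
    rw [← intervalIntegrable_iff_integrableOn_Icc_of_le zero_le_one]
    exact asker_integrable_01 hp

private lemma pipHalf_pos (hp : 2 ≤ p) : 0 < pipHalf p := by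
  have := arcsinp_strictMonoOn hp (left_mem_Icc.mpr zero_le_one)
    (right_mem_Icc.mpr zero_le_one) zero_lt_one
  rwa [arcsinp_zero'] at this

private lemma arcsinp_hasDerivAt (hp : 2 ≤ p) {s : ℝ} (h0 : 0 < s) (h1 : s < 1) :
    HasDerivAt (arcsinp p) ((1 - s ^ p) ^ (-(1/p))) s := by
  have hi : IntervalIntegrable (fun t : ℝ => (1 - t ^ p) ^ (-(1/p))) volume 0 s :=
    asker_integrable hp ⟨le_rfl, zero_le_one⟩ ⟨h0.le, h1.le⟩
  have hca := asker_contAt hp h0.le h1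
  have hmeas : StronglyMeasurableAtFilter (fun t : ℝ => (1 - t ^ p) ^ (-(1/p))) (𝓝 s) volume := by
    refine ⟨Ioo 0 1, Ioo_mem_nhds h0 h1, ?_⟩
    refine (ContinuousOn.aestronglyMeasurable ?_ measurableSet_Ioo)
    intro t ht
    exact (asker_contAt hp ht.1.le ht.2).continuousWithinAt
  exact intervalIntegral.integral_hasDerivAt_right hi hmeas hca

end Lemmas

section Lemmas2
variable {p : ℝ}

private lemma sinp_exists (hp : 2 ≤ p) {x : ℝ} (h0 : 0 ≤ x) (h1 : x ≤ pipHalf p) :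
    ∃ s ∈ Icc (0:ℝ) 1, arcsinp p s = x := by
  have h := intermediate_value_Icc zero_le_one (arcsinp_continuousOn hp)
  rw [arcsinp_zero'] at h
  obtain ⟨s, hs, hsx⟩ := h (⟨h0, h1⟩ : x ∈ Icc 0 (arcsinp p 1))
  exact ⟨s, hs, hsx⟩

private lemma sinp_mem (hp : 2 ≤ p) {x : ℝ} (h0 : 0 ≤ x) (h1 : x ≤ pipHalf p) :
    sinp p x ∈ Icc (0:ℝ) 1 :=
  Function.invFunOn_mem (sinp_exists hp h0 h1)

private lemma arcsinp_sinp (hp : 2 ≤ p) {x : ℝ} (h0 : 0 ≤ x) (h1 : x ≤ pipHalf p) :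
    arcsinp p (sinp p x) = x :=
  Function.invFunOn_eq (sinp_exists hp h0 h1)

private lemma sinp_arcsinp (hp : 2 ≤ p) {s : ℝ} (hs : s ∈ Icc (0:ℝ) 1) :
    sinp p (arcsinp p s) = s :=
  ((arcsinp_strictMonoOn hp).injOn).leftInvOn_invFunOn hs

private lemma sinp_zero (hp : 2 ≤ p) : sinp p 0 = 0 := by
  have := sinp_arcsinp hp (left_mem_Icc.mpr (zero_le_one : (0:ℝ) ≤ 1))
  rwa [arcsinp_zero'] at this

private lemma sinp_one' (hp : 2 ≤ p) : sinp p (pipHalf p) = 1 := by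
  have := sinp_arcsinp hp (right_mem_Icc.mpr (zero_le_one : (0:ℝ) ≤ 1))
  exact this

private lemma sinp_pos (hp : 2 ≤ p) {x : ℝ} (h0 : 0 < x) (h1 : x ≤ pipHalf p) :
    0 < sinp p x := by
  rcases eq_or_lt_of_le (sinp_mem hp h0.le h1).1 with h | h
  · exfalso
    have := arcsinp_sinp hp h0.le h1
    rw [← h, arcsinp_zero'] at this
    linarith
  · exact h

private lemma sinp_lt_one (hp : 2 ≤ p) {x : ℝ} (h0 : 0 ≤ x) (h1 : x < pipHalf p) :
    sinp p x < 1 := by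
  rcases lt_or_eq_of_le (sinp_mem hp h0 h1.le).2 with h | h
  · exact h
  · exfalso
    have h2 := arcsinp_sinp hp h0 h1.le
    rw [h] at h2
    have : pipHalf p = x := h2
    linarith

private lemma sinp_strictMonoOn (hp : 2 ≤ p) :
    StrictMonoOn (sinp p) (Icc 0 (pipHalf p)) := by
  intro a ha b hb hab
  by_contra hcon
  push_neg at hcon
  have h1 : arcsinp p (sinp p b) ≤ arcsinp p (sinp p a) :=
    ((arcsinp_strictMonoOn hp).monotoneOn) (sinp_mem hp hb.1 hb.2) (sinp_mem hp ha.1 ha.2) hcon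
  rw [arcsinp_sinp hp ha.1 ha.2, arcsinp_sinp hp hb.1 hb.2] at h1
  linarith

private lemma sinp_image (hp : 2 ≤ p) :
    Icc (0:ℝ) 1 ⊆ sinp p '' Icc 0 (pipHalf p) := by
  intro s hs
  refine ⟨arcsinp p s, ⟨?_, ?_⟩, sinp_arcsinp hp hs⟩
  · have := ((arcsinp_strictMonoOn hp).monotoneOn) (left_mem_Icc.mpr zero_le_one) hs hs.1
    rwa [arcsinp_zero'] at this
  · exact ((arcsinp_strictMonoOn hp).monotoneOn) hs (right_mem_Icc.mpr zero_le_one) hs.2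

private lemma sinp_continuousAt (hp : 2 ≤ p) {x : ℝ} (h0 : 0 < x) (h1 : x < pipHalf p) :
    ContinuousAt (sinp p) x := by
  apply (sinp_strictMonoOn hp).continuousAt_of_image_mem_nhds (Icc_mem_nhds h0 h1)
  apply mem_of_superset _ (sinp_image hp)
  exact Icc_mem_nhds (sinp_pos hp h0 h1.le) (sinp_lt_one hp h0.le h1)

private lemma sinp_cwa_zero (hp : 2 ≤ p) : ContinuousWithinAt (sinp p) (Ici 0) 0 := by
  apply (sinp_strictMonoOn hp).continuousWithinAt_right_of_image_mem_nhdsWithin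
  · exact Icc_mem_nhdsGE_of_mem ⟨le_rfl, pipHalf_pos hp⟩
  · rw [sinp_zero hp]
    exact mem_of_superset (Icc_mem_nhdsGE_of_mem ⟨le_rfl, zero_lt_one⟩) (sinp_image hp)

private lemma sinp_continuousOn (hp : 2 ≤ p) {b : ℝ} (hb0 : 0 ≤ b) (hb : b < pipHalf p) :
    ContinuousOn (sinp p) (Icc 0 b) := by
  intro y hy
  rcases eq_or_lt_of_le hy.1 with h | h
  · rw [← h]
    exact (sinp_cwa_zero hp).mono Icc_subset_Ici_self
  · exact (sinp_continuousAt hp h (lt_of_le_of_lt hy.2 hb)).continuousWithinAt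

end Lemmas2

section Lemmas3
variable {p : ℝ}

private lemma sinp_hasDerivAt (hp : 2 ≤ p) {x : ℝ} (h0 : 0 < x) (h1 : x < pipHalf p) :
    HasDerivAt (sinp p) (cosp p x) x := by
  have hs0 := sinp_pos hp h0 h1.le
  have hs1 := sinp_lt_one hp h0.le h1
  have hF := arcsinp_hasDerivAt hp hs0 hs1
  have hne : ((1 - (sinp p x) ^ p) ^ (-(1/p))) ≠ 0 := (asker_pos hp hs0.le hs1).ne'
  have hev : ∀ᶠ y in 𝓝 x, arcsinp p (sinp p y) = y := by
    filter_upwards [Ioo_mem_nhds h0 h1] with y hy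
    exact arcsinp_sinp hp hy.1.le hy.2.le
  have h := HasDerivAt.of_local_left_inverse (sinp_continuousAt hp h0 h1) hF hne hev
  have heq : ((1 - (sinp p x) ^ p) ^ (-(1/p)))⁻¹ = cosp p x := by
    rw [rpow_neg (asker_base_pos hp hs0.le hs1).le, inv_inv]
    rfl
  rwa [heq] at h

/-! ### hyperbolic side -/

private lemma ahker_base_pos (hp : 2 ≤ p) {t : ℝ} (h0 : 0 ≤ t) : 0 < 1 + t ^ p := by
  have : 0 ≤ t ^ p := rpow_nonneg h0 p
  linarith

private lemma ahker_pos (hp : 2 ≤ p) {t : ℝ} (h0 : 0 ≤ t) : 0 < (1 + t ^ p) ^ (-(1/p)) :=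
  rpow_pos_of_pos (ahker_base_pos hp h0) _

private lemma ahker_contAt (hp : 2 ≤ p) {t : ℝ} (h0 : 0 ≤ t) :
    ContinuousAt (fun t : ℝ => (1 + t ^ p) ^ (-(1/p))) t := by
  have hbase : ContinuousAt (fun t : ℝ => 1 + t ^ p) t :=
    continuousAt_const.add (continuous_rpow_const (p_pos hp).le).continuousAt
  exact hbase.rpow_const (Or.inl (ahker_base_pos hp h0).ne')

private lemma ahker_integrable (hp : 2 ≤ p) {a b : ℝ} (ha : 0 ≤ a) (hb : 0 ≤ b) :
    IntervalIntegrable (fun t : ℝ => (1 + t ^ p) ^ (-(1/p))) volume a b := by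
  apply ContinuousOn.intervalIntegrable
  intro t ht
  have ht0 : 0 ≤ t := le_trans (le_min ha hb) (by simpa [uIcc] using ht.1)
  exact (ahker_contAt hp ht0).continuousWithinAt

private lemma arsinhp_zero : arsinhp p 0 = 0 := intervalIntegral.integral_same

private lemma arsinhp_add (hp : 2 ≤ p) {a b : ℝ} (ha : 0 ≤ a) (hb : 0 ≤ b) :
    arsinhp p a + (∫ t in a..b, (1 + t ^ p) ^ (-(1/p))) = arsinhp p b :=
  integral_add_adjacent_intervals (ahker_integrable hp le_rfl ha) (ahker_integrable hp ha hb)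

private lemma arsinhp_strictMonoOn (hp : 2 ≤ p) : StrictMonoOn (arsinhp p) (Ici 0) := by
  intro a ha b hb hab
  have hpos : 0 < ∫ t in a..b, (1 + t ^ p) ^ (-(1/p)) := by
    apply intervalIntegral_pos_of_pos_on (ahker_integrable hp ha hb) _ hab
    intro t ht
    exact ahker_pos hp (le_of_lt (lt_of_le_of_lt ha ht.1))
  have := arsinhp_add hp ha hb
  linarith

private lemma arsinhp_nonneg (hp : 2 ≤ p) {b : ℝ} (hb : 0 ≤ b) : 0 ≤ arsinhp p b := by
  apply intervalIntegral.integral_nonneg hb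
  intro t ht
  exact (ahker_pos hp ht.1).le

private lemma arsinhp_continuousOn (hp : 2 ≤ p) {b : ℝ} (hb : 0 ≤ b) :
    ContinuousOn (arsinhp p) (Icc 0 b) := by
  have h := intervalIntegral.continuousOn_primitive_interval (a := 0) (b := b) (μ := volume)
    (f := fun t : ℝ => (1 + t ^ p) ^ (-(1/p))) ?_
  · rw [uIcc_of_le hb] at h
    exact h
  · rw [uIcc_of_le hb, ← intervalIntegrable_iff_integrableOn_Icc_of_le hb]
    exact ahker_integrable hp le_rfl hb

private lemma arsinhp_hasDerivAt (hp : 2 ≤ p) {h : ℝ} (hh : 0 < h) :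
    HasDerivAt (arsinhp p) ((1 + h ^ p) ^ (-(1/p))) h := by
  have hi := ahker_integrable hp (le_refl (0:ℝ)) hh.le
  have hmeas : StronglyMeasurableAtFilter (fun t : ℝ => (1 + t ^ p) ^ (-(1/p))) (𝓝 h) volume := by
    refine ⟨Ioi 0, Ioi_mem_nhds hh, ?_⟩
    refine ContinuousOn.aestronglyMeasurable ?_ measurableSet_Ioi
    intro t ht
    exact (ahker_contAt hp (le_of_lt ht)).continuousWithinAt
  exact intervalIntegral.integral_hasDerivAt_right hi hmeas (ahker_contAt hp hh.le)

private lemma arsinhp_big (hp : 2 ≤ p) (R : ℝ) : ∃ M, 1 ≤ M ∧ R ≤ arsinhp p M := by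
  refine ⟨max 1 (exp (2*R)), le_max_left _ _, ?_⟩
  set M := max 1 (exp (2*R)) with hMdef
  have hM1 : (1:ℝ) ≤ M := le_max_left _ _
  have h2 : (∫ t in (1:ℝ)..M, (2*t)⁻¹) ≤ ∫ t in (1:ℝ)..M, (1 + t ^ p) ^ (-(1/p)) := by
    apply integral_mono_on hM1 ?_ (ahker_integrable hp zero_le_one (by linarith)) ?_
    · apply ContinuousOn.intervalIntegrable
      apply ContinuousOn.inv₀ (continuousOn_const.mul continuousOn_id)
      intro t ht
      have : (1:ℝ) ≤ t := by
        rcases le_total 1 M with hc | hc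
        · rw [uIcc_of_le hc] at ht; exact ht.1
        · rw [uIcc_of_ge hc] at ht; linarith [ht.1]
      have ht0 : (0:ℝ) < t := by linarith
      exact (mul_pos two_pos ht0).ne'
    · intro t ht
      have ht1 : (1:ℝ) ≤ t := ht.1
      have ht0 : (0:ℝ) < t := by linarith
      have e1 : 1 + t ^ p ≤ 2 * t ^ p := by
        have : (1:ℝ) ≤ t ^ p := one_le_rpow ht1 (p_pos hp).le
        linarith
      have e2 : (2 * t ^ p) ^ (-(1/p)) ≤ (1 + t ^ p) ^ (-(1/p)) :=
        rpow_le_rpow_of_nonpos (ahker_base_pos hp ht0.le) e1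
          (by have := ip_pos hp; linarith)
      refine le_trans ?_ e2
      rw [mul_rpow (by norm_num) (rpow_nonneg ht0.le p)]
      have e3 : (t ^ p) ^ (-(1/p)) = t⁻¹ := by
        rw [← rpow_mul ht0.le]
        have : p * -(1/p) = -1 := by field_simp
        rw [this, rpow_neg_one]
      rw [e3]
      have e4 : (1:ℝ)/2 ≤ (2:ℝ) ^ (-(1/p)) := by
        have h5 := rpow_le_rpow_of_exponent_le (one_le_two)
          (by have := ip_lt_one hp; linarith : -1 ≤ -(1/p))
        rw [rpow_neg_one] at h5
        calc (1:ℝ)/2 = (2:ℝ)⁻¹ := by norm_num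
          _ ≤ _ := h5
      have e5 : (2*t)⁻¹ = (1/2) * t⁻¹ := by
        rw [mul_inv]; ring
      rw [e5]
      apply mul_le_mul_of_nonneg_right e4 (by positivity)
  have h3 : (∫ t in (1:ℝ)..M, (2*t)⁻¹) = log M / 2 := by
    have he : ∀ t : ℝ, (2*t)⁻¹ = (2:ℝ)⁻¹ * (1/t) := by
      intro t; rw [mul_inv]; ring
    simp_rw [he]
    rw [intervalIntegral.integral_const_mul]
    rw [integral_one_div (by rw [uIcc_of_le hM1]; intro hcon; linarith [hcon.1] : (0:ℝ) ∉ uIcc 1 M)]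
    rw [div_one]
    ring
  have h4 := arsinhp_add hp (zero_le_one) (by linarith : (0:ℝ) ≤ M)
  have h5 : 0 ≤ arsinhp p 1 := arsinhp_nonneg hp zero_le_one
  have h6 : 2 * R ≤ log M := by
    calc 2 * R = log (exp (2*R)) := (log_exp _).symm
      _ ≤ log M := Real.log_le_log (exp_pos _) (le_max_right _ _)
  have : arsinhp p 1 + (∫ t in (1:ℝ)..M, (1 + t ^ p) ^ (-(1/p))) = arsinhp p M := by
    have := arsinhp_add hp (zero_le_one : (0:ℝ) ≤ 1) (by linarith : (0:ℝ) ≤ M)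
    exact this
  linarith

end Lemmas3

section Lemmas4
variable {p : ℝ}

private lemma sinhp_exists (hp : 2 ≤ p) {x M : ℝ} (h0 : 0 ≤ x) (hM0 : 0 ≤ M)
    (hxM : x ≤ arsinhp p M) : ∃ h ∈ Ici (0:ℝ), arsinhp p h = x := by
  have h := intermediate_value_Icc hM0 (arsinhp_continuousOn hp hM0)
  rw [arsinhp_zero] at h
  obtain ⟨s, hs, hsx⟩ := h (⟨h0, hxM⟩ : x ∈ Icc 0 (arsinhp p M))
  exact ⟨s, hs.1, hsx⟩

private lemma sinhp_nonneg (hp : 2 ≤ p) {x M : ℝ} (h0 : 0 ≤ x) (hM0 : 0 ≤ M)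
    (hxM : x ≤ arsinhp p M) : 0 ≤ sinhp p x :=
  Function.invFunOn_mem (sinhp_exists hp h0 hM0 hxM)

private lemma arsinhp_sinhp (hp : 2 ≤ p) {x M : ℝ} (h0 : 0 ≤ x) (hM0 : 0 ≤ M)
    (hxM : x ≤ arsinhp p M) : arsinhp p (sinhp p x) = x :=
  Function.invFunOn_eq (sinhp_exists hp h0 hM0 hxM)

private lemma sinhp_arsinhp (hp : 2 ≤ p) {h : ℝ} (hh : 0 ≤ h) :
    sinhp p (arsinhp p h) = h :=
  ((arsinhp_strictMonoOn hp).injOn).leftInvOn_invFunOn hh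

private lemma sinhp_zero (hp : 2 ≤ p) : sinhp p 0 = 0 := by
  have := sinhp_arsinhp hp (le_refl (0:ℝ))
  rwa [arsinhp_zero] at this

private lemma sinhp_pos (hp : 2 ≤ p) {x M : ℝ} (h0 : 0 < x) (hM0 : 0 ≤ M)
    (hxM : x ≤ arsinhp p M) : 0 < sinhp p x := by
  rcases eq_or_lt_of_le (sinhp_nonneg hp h0.le hM0 hxM) with h | h
  · exfalso
    have := arsinhp_sinhp hp h0.le hM0 hxM
    rw [← h, arsinhp_zero] at this
    linarith
  · exact h

private lemma sinhp_lt (hp : 2 ≤ p) {x M : ℝ} (h0 : 0 ≤ x) (hM0 : 0 ≤ M)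
    (hxM : x < arsinhp p M) : sinhp p x < M := by
  by_contra hcon
  push_neg at hcon
  have h1 : arsinhp p M ≤ arsinhp p (sinhp p x) :=
    ((arsinhp_strictMonoOn hp).monotoneOn) hM0 (sinhp_nonneg hp h0 hM0 hxM.le) hcon
  rw [arsinhp_sinhp hp h0 hM0 hxM.le] at h1
  linarith

private lemma sinhp_strictMonoOn (hp : 2 ≤ p) {M : ℝ} (hM0 : 0 ≤ M) :
    StrictMonoOn (sinhp p) (Icc 0 (arsinhp p M)) := by
  intro a ha b hb hab
  by_contra hcon
  push_neg at hcon
  have h1 : arsinhp p (sinhp p b) ≤ arsinhp p (sinhp p a) :=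
    ((arsinhp_strictMonoOn hp).monotoneOn) (sinhp_nonneg hp hb.1 hM0 hb.2)
      (sinhp_nonneg hp ha.1 hM0 ha.2) hcon
  rw [arsinhp_sinhp hp ha.1 hM0 ha.2, arsinhp_sinhp hp hb.1 hM0 hb.2] at h1
  linarith

private lemma sinhp_image (hp : 2 ≤ p) {M : ℝ} (hM0 : 0 ≤ M) :
    Icc (0:ℝ) M ⊆ sinhp p '' Icc 0 (arsinhp p M) := by
  intro h hh
  refine ⟨arsinhp p h, ⟨arsinhp_nonneg hp hh.1, ?_⟩, sinhp_arsinhp hp hh.1⟩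
  exact ((arsinhp_strictMonoOn hp).monotoneOn) hh.1 hM0 hh.2

private lemma sinhp_continuousAt (hp : 2 ≤ p) {x M : ℝ} (h0 : 0 < x) (hM0 : 0 ≤ M)
    (hxM : x < arsinhp p M) : ContinuousAt (sinhp p) x := by
  apply (sinhp_strictMonoOn hp hM0).continuousAt_of_image_mem_nhds (Icc_mem_nhds h0 hxM)
  apply mem_of_superset _ (sinhp_image hp hM0)
  exact Icc_mem_nhds (sinhp_pos hp h0 hM0 hxM.le) (sinhp_lt hp h0.le hM0 hxM)

private lemma sinhp_cwa_zero (hp : 2 ≤ p) {M : ℝ} (hM0 : 0 ≤ M)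
    (hMpos : 0 < arsinhp p M) : ContinuousWithinAt (sinhp p) (Ici 0) 0 := by
  apply (sinhp_strictMonoOn hp hM0).continuousWithinAt_right_of_image_mem_nhdsWithin
  · exact Icc_mem_nhdsGE_of_mem ⟨le_rfl, hMpos⟩
  · rw [sinhp_zero hp]
    have hM0' : 0 < M := by
      by_contra hc
      push_neg at hc
      have : M = 0 := le_antisymm hc hM0
      rw [this, arsinhp_zero] at hMpos
      linarith
    exact mem_of_superset (Icc_mem_nhdsGE_of_mem ⟨le_rfl, hM0'⟩) (sinhp_image hp hM0)

private lemma sinhp_hasDerivAt0 (hp : 2 ≤ p) {x M : ℝ} (h0 : 0 < x) (hM0 : 0 ≤ M)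
    (hxM : x < arsinhp p M) : HasDerivAt (sinhp p) (coshp p x) x := by
  have hs0 := sinhp_pos hp h0 hM0 hxM.le
  have hF := arsinhp_hasDerivAt hp hs0
  have hne : ((1 + (sinhp p x) ^ p) ^ (-(1/p))) ≠ 0 := (ahker_pos hp hs0.le).ne'
  have hev : ∀ᶠ y in 𝓝 x, arsinhp p (sinhp p y) = y := by
    filter_upwards [Ioo_mem_nhds h0 hxM] with y hy
    exact arsinhp_sinhp hp hy.1.le hM0 hy.2.le
  have h := HasDerivAt.of_local_left_inverse (sinhp_continuousAt hp h0 hM0 hxM) hF hne hev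
  have heq : ((1 + (sinhp p x) ^ p) ^ (-(1/p)))⁻¹ = coshp p x := by
    rw [rpow_neg (ahker_base_pos hp hs0.le).le, inv_inv]
    rfl
  rwa [heq] at h

/-! ### `pipHalf`-level versions -/

private lemma sinhp_pos' (hp : 2 ≤ p) {x : ℝ} (h0 : 0 < x) (h1 : x ≤ pipHalf p) :
    0 < sinhp p x := by
  obtain ⟨M, hM1, hMR⟩ := arsinhp_big hp (pipHalf p)
  exact sinhp_pos (M := M) hp h0 (by linarith) (by linarith)

private lemma sinhp_nonneg' (hp : 2 ≤ p) {x : ℝ} (h0 : 0 ≤ x) (h1 : x ≤ pipHalf p) :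
    0 ≤ sinhp p x := by
  obtain ⟨M, hM1, hMR⟩ := arsinhp_big hp (pipHalf p)
  exact sinhp_nonneg (M := M) hp h0 (by linarith) (by linarith)

private lemma arsinhp_sinhp' (hp : 2 ≤ p) {x : ℝ} (h0 : 0 ≤ x) (h1 : x ≤ pipHalf p) :
    arsinhp p (sinhp p x) = x := by
  obtain ⟨M, hM1, hMR⟩ := arsinhp_big hp (pipHalf p)
  exact arsinhp_sinhp (M := M) hp h0 (by linarith) (by linarith)

private lemma sinhp_continuousOn' (hp : 2 ≤ p) {b : ℝ} (hb0 : 0 ≤ b) (hb : b ≤ pipHalf p) :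
    ContinuousOn (sinhp p) (Icc 0 b) := by
  obtain ⟨M, hM1, hMR⟩ := arsinhp_big hp (pipHalf p + 1)
  have hM0 : (0:ℝ) ≤ M := by linarith
  intro y hy
  rcases eq_or_lt_of_le hy.1 with h | h
  · rw [← h]
    exact (sinhp_cwa_zero hp hM0 (by have := pipHalf_pos hp; linarith)).mono Icc_subset_Ici_self
  · exact (sinhp_continuousAt hp h hM0 (by linarith [hy.2] : y < arsinhp p M)).continuousWithinAt

private lemma sinhp_hasDerivAt' (hp : 2 ≤ p) {x : ℝ} (h0 : 0 < x) (h1 : x ≤ pipHalf p) :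
    HasDerivAt (sinhp p) (coshp p x) x := by
  obtain ⟨M, hM1, hMR⟩ := arsinhp_big hp (pipHalf p + 1)
  exact sinhp_hasDerivAt0 (M := M) hp h0 (by linarith) (by linarith)

end Lemmas4

section Lemmas5
variable {p : ℝ}

private lemma cosp_pos (hp : 2 ≤ p) {x : ℝ} (h0 : 0 ≤ x) (h1 : x < pipHalf p) :
    0 < cosp p x :=
  rpow_pos_of_pos (asker_base_pos hp (sinp_mem hp h0 h1.le).1 (sinp_lt_one hp h0 h1)) _

private lemma cosp_base_pos (hp : 2 ≤ p) {x : ℝ} (h0 : 0 ≤ x) (h1 : x < pipHalf p) :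
    0 < 1 - sinp p x ^ p :=
  asker_base_pos hp (sinp_mem hp h0 h1.le).1 (sinp_lt_one hp h0 h1)

private lemma cosp_zero (hp : 2 ≤ p) : cosp p 0 = 1 := by
  rw [cosp, sinp_zero hp, Real.zero_rpow (p_ne hp), sub_zero, Real.one_rpow]

private lemma coshp_base_pos (hp : 2 ≤ p) {x : ℝ} (h0 : 0 ≤ x) (h1 : x ≤ pipHalf p) :
    0 < 1 + sinhp p x ^ p :=
  ahker_base_pos hp (sinhp_nonneg' hp h0 h1)

private lemma coshp_pos (hp : 2 ≤ p) {x : ℝ} (h0 : 0 ≤ x) (h1 : x ≤ pipHalf p) :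
    0 < coshp p x :=
  rpow_pos_of_pos (coshp_base_pos hp h0 h1) _

private lemma coshp_zero (hp : 2 ≤ p) : coshp p 0 = 1 := by
  rw [coshp, sinhp_zero hp, Real.zero_rpow (p_ne hp), add_zero, Real.one_rpow]

private lemma cosp_continuousOn (hp : 2 ≤ p) {b : ℝ} (hb0 : 0 ≤ b) (hb : b < pipHalf p) :
    ContinuousOn (cosp p) (Icc 0 b) := by
  apply ContinuousOn.rpow_const
  · apply continuousOn_const.sub
    exact (sinp_continuousOn hp hb0 hb).rpow_const (fun y _ => Or.inr (p_pos hp).le)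
  · intro y hy
    exact Or.inl (cosp_base_pos hp hy.1 (lt_of_le_of_lt hy.2 hb)).ne'

private lemma coshp_continuousOn (hp : 2 ≤ p) {b : ℝ} (hb0 : 0 ≤ b) (hb : b ≤ pipHalf p) :
    ContinuousOn (coshp p) (Icc 0 b) := by
  apply ContinuousOn.rpow_const
  · apply continuousOn_const.add
    exact (sinhp_continuousOn' hp hb0 hb).rpow_const (fun y _ => Or.inr (p_pos hp).le)
  · intro y hy
    exact Or.inl (coshp_base_pos hp hy.1 (le_trans hy.2 hb)).ne'

private lemma cosp_hasDerivAt (hp : 2 ≤ p) {x : ℝ} (h0 : 0 < x) (h1 : x < pipHalf p) :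
    HasDerivAt (cosp p)
      (-((1 - sinp p x ^ p) ^ (1/p - 1) * sinp p x ^ (p - 1) * cosp p x)) x := by
  have hS := sinp_hasDerivAt hp h0 h1
  have hs0 := sinp_pos hp h0 h1.le
  have hb := cosp_base_pos hp h0.le h1
  have h2 : HasDerivAt (fun y => sinp p y ^ p) (cosp p x * p * sinp p x ^ (p-1)) x :=
    hS.rpow_const (Or.inl hs0.ne')
  have h3 : HasDerivAt (fun y => 1 - sinp p y ^ p) (-(cosp p x * p * sinp p x ^ (p-1))) x :=
    h2.const_sub 1
  have h4 := h3.rpow_const (p := 1/p) (Or.inl hb.ne')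
  have heq : -(cosp p x * p * sinp p x ^ (p-1)) * (1/p) * (1 - sinp p x ^ p) ^ (1/p - 1)
      = -((1 - sinp p x ^ p) ^ (1/p - 1) * sinp p x ^ (p - 1) * cosp p x) := by
    have hne := p_ne hp
    field_simp
  rw [heq] at h4
  exact h4

private lemma coshp_hasDerivAt (hp : 2 ≤ p) {x : ℝ} (h0 : 0 < x) (h1 : x ≤ pipHalf p) :
    HasDerivAt (coshp p)
      ((1 + sinhp p x ^ p) ^ (1/p - 1) * sinhp p x ^ (p - 1) * coshp p x) x := by
  have hS := sinhp_hasDerivAt' hp h0 h1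
  have hs0 := sinhp_pos' hp h0 h1
  have hb := coshp_base_pos hp h0.le h1
  have h2 : HasDerivAt (fun y => sinhp p y ^ p) (coshp p x * p * sinhp p x ^ (p-1)) x :=
    hS.rpow_const (Or.inl hs0.ne')
  have h3 : HasDerivAt (fun y => 1 + sinhp p y ^ p) (coshp p x * p * sinhp p x ^ (p-1)) x :=
    h2.const_add 1
  have h4 := h3.rpow_const (p := 1/p) (Or.inl hb.ne')
  have heq : coshp p x * p * sinhp p x ^ (p-1) * (1/p) * (1 + sinhp p x ^ p) ^ (1/p - 1)
      = (1 + sinhp p x ^ p) ^ (1/p - 1) * sinhp p x ^ (p - 1) * coshp p x := by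
    have hne := p_ne hp
    field_simp
  rw [heq] at h4
  exact h4

end Lemmas5

section Lemmas6
variable {p : ℝ}

private lemma A1 (hp : 2 ≤ p) {x : ℝ} (h0 : 0 < x) (h1 : x < pipHalf p) :
    x * cosp p x < sinp p x := by
  have hcont : ContinuousOn (fun y => sinp p y - y * cosp p y) (Icc 0 x) :=
    (sinp_continuousOn hp h0.le h1).sub
      (continuousOn_id.mul (cosp_continuousOn hp h0.le h1))
  have hmono : StrictMonoOn (fun y => sinp p y - y * cosp p y) (Icc 0 x) := by
    apply strictMonoOn_of_deriv_pos (convex_Icc _ _) hcont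
    intro y hy
    rw [interior_Icc] at hy
    have hy1 : y < pipHalf p := hy.2.trans h1
    have hgy : HasDerivAt (fun y => sinp p y - y * cosp p y)
        (cosp p y - (1 * cosp p y + y *
          (-((1 - sinp p y ^ p) ^ (1/p - 1) * sinp p y ^ (p - 1) * cosp p y)))) y :=
      (sinp_hasDerivAt hp hy.1 hy1).sub
        ((hasDerivAt_id y).mul (cosp_hasDerivAt hp hy.1 hy1))
    rw [hgy.deriv]
    have hA : 0 < (1 - sinp p y ^ p) ^ (1/p - 1) :=
      rpow_pos_of_pos (cosp_base_pos hp hy.1.le hy1) _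
    have hB : 0 < sinp p y ^ (p-1) := rpow_pos_of_pos (sinp_pos hp hy.1 hy1.le) _
    have hC : 0 < cosp p y := cosp_pos hp hy.1.le hy1
    nlinarith [mul_pos (mul_pos hA hB) hC, hy.1]
  have h2 := hmono (left_mem_Icc.mpr h0.le) (right_mem_Icc.mpr h0.le) h0
  simp only [sinp_zero hp, zero_mul, sub_zero, zero_sub] at h2
  linarith [h2]

private lemma A2 (hp : 2 ≤ p) {x : ℝ} (h0 : 0 < x) (h1 : x < pipHalf p) :
    sinhp p x < x * coshp p x := by
  have hcont : ContinuousOn (fun y => y * coshp p y - sinhp p y) (Icc 0 x) :=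
    (continuousOn_id.mul (coshp_continuousOn hp h0.le h1.le)).sub
      (sinhp_continuousOn' hp h0.le h1.le)
  have hmono : StrictMonoOn (fun y => y * coshp p y - sinhp p y) (Icc 0 x) := by
    apply strictMonoOn_of_deriv_pos (convex_Icc _ _) hcont
    intro y hy
    rw [interior_Icc] at hy
    have hy1 : y < pipHalf p := hy.2.trans h1
    have hgy : HasDerivAt (fun y => y * coshp p y - sinhp p y)
        ((1 * coshp p y + y *
          ((1 + sinhp p y ^ p) ^ (1/p - 1) * sinhp p y ^ (p - 1) * coshp p y))
          - coshp p y) y :=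
      ((hasDerivAt_id y).mul (coshp_hasDerivAt hp hy.1 hy1.le)).sub
        (sinhp_hasDerivAt' hp hy.1 hy1.le)
    rw [hgy.deriv]
    have hA : 0 < (1 + sinhp p y ^ p) ^ (1/p - 1) :=
      rpow_pos_of_pos (coshp_base_pos hp hy.1.le hy1.le) _
    have hB : 0 < sinhp p y ^ (p-1) := rpow_pos_of_pos (sinhp_pos' hp hy.1 hy1.le) _
    have hC : 0 < coshp p y := coshp_pos hp hy.1.le hy1.le
    nlinarith [mul_pos (mul_pos hA hB) hC, hy.1]
  have h2 := hmono (left_mem_Icc.mpr h0.le) (right_mem_Icc.mpr h0.le) h0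
  simp only [sinhp_zero hp, zero_mul, sub_zero, zero_sub, mul_zero] at h2
  linarith [h2]

private lemma key_ratio (hp : 2 ≤ p) {y : ℝ} (h0 : 0 < y) (h1 : y < pipHalf p) :
    sinhp p y / coshp p y < sinp p y / cosp p y := by
  have hC := cosp_pos hp h0.le h1
  have hCh := coshp_pos hp h0.le h1.le
  rw [div_lt_div_iff₀ hCh hC]
  calc sinhp p y * cosp p y < (y * coshp p y) * cosp p y :=
        mul_lt_mul_of_pos_right (A2 hp h0 h1) hC
    _ = (y * cosp p y) * coshp p y := by ring
    _ < sinp p y * coshp p y := mul_lt_mul_of_pos_right (A1 hp h0 h1) hCh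

private lemma ratio_eq_trig (hp : 2 ≤ p) {y : ℝ} (h0 : 0 < y) (h1 : y < pipHalf p) (e : ℝ) :
    (sinp p y / cosp p y) ^ e = (1 - sinp p y ^ p) ^ (-(e/p)) * sinp p y ^ e := by
  have hs0 := sinp_pos hp h0 h1.le
  have hQ := cosp_base_pos hp h0.le h1
  rw [show cosp p y = (1 - sinp p y ^ p) ^ (1/p : ℝ) from rfl]
  rw [div_rpow hs0.le (rpow_nonneg hQ.le _)]
  rw [← rpow_mul hQ.le]
  rw [div_eq_mul_inv, ← rpow_neg hQ.le, mul_comm]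
  congr 2
  ring

private lemma ratio_eq_hyp (hp : 2 ≤ p) {y : ℝ} (h0 : 0 < y) (h1 : y ≤ pipHalf p) (e : ℝ) :
    (sinhp p y / coshp p y) ^ e = (1 + sinhp p y ^ p) ^ (-(e/p)) * sinhp p y ^ e := by
  have hs0 := sinhp_pos' hp h0 h1
  have hQ := coshp_base_pos hp h0.le h1
  rw [show coshp p y = (1 + sinhp p y ^ p) ^ (1/p : ℝ) from rfl]
  rw [div_rpow hs0.le (rpow_nonneg hQ.le _)]
  rw [← rpow_mul hQ.le]
  rw [div_eq_mul_inv, ← rpow_neg hQ.le, mul_comm]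
  congr 2
  ring

private lemma key_pow_lt (hp : 2 ≤ p) {y : ℝ} (h0 : 0 < y) (h1 : y < pipHalf p) :
    (1 + sinhp p y ^ p) ^ (1/p - 1) * sinhp p y ^ (p-1)
      < (1 - sinp p y ^ p) ^ (1/p - 1) * sinp p y ^ (p-1) := by
  have hr := rpow_lt_rpow
    (div_nonneg (sinhp_nonneg' hp h0.le h1.le) (coshp_pos hp h0.le h1.le).le)
    (key_ratio hp h0 h1) (by linarith : (0:ℝ) < p - 1)
  rw [ratio_eq_trig hp h0 h1, ratio_eq_hyp hp h0 h1.le] at hr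
  have he : -((p-1)/p) = 1/p - 1 := by
    field_simp
    ring
  rw [he] at hr
  exact hr

private lemma key_pow_le (hp : 2 ≤ p) {y : ℝ} (h0 : 0 < y) (h1 : y < pipHalf p) :
    (1 + sinhp p y ^ p) ^ (-((p-2)/p)) * sinhp p y ^ (p-2)
      ≤ (1 - sinp p y ^ p) ^ (-((p-2)/p)) * sinp p y ^ (p-2) := by
  have hr := rpow_le_rpow
    (div_nonneg (sinhp_nonneg' hp h0.le h1.le) (coshp_pos hp h0.le h1.le).le)
    (key_ratio hp h0 h1).le (by linarith : (0:ℝ) ≤ p - 2)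
  rw [ratio_eq_trig hp h0 h1, ratio_eq_hyp hp h0 h1.le] at hr
  exact hr

private lemma A3 (hp : 2 ≤ p) {x : ℝ} (h0 : 0 < x) (h1 : x < pipHalf p) :
    cosp p x * coshp p x < 1 := by
  have hanti : StrictAntiOn (fun y => cosp p y * coshp p y) (Icc 0 x) := by
    apply strictAntiOn_of_deriv_neg (convex_Icc _ _)
      ((cosp_continuousOn hp h0.le h1).mul (coshp_continuousOn hp h0.le h1.le))
    intro y hy
    rw [interior_Icc] at hy
    have hy1 : y < pipHalf p := hy.2.trans h1
    have hK : HasDerivAt (fun y => cosp p y * coshp p y)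
        ((-((1 - sinp p y ^ p) ^ (1/p - 1) * sinp p y ^ (p - 1) * cosp p y)) * coshp p y
          + cosp p y *
            ((1 + sinhp p y ^ p) ^ (1/p - 1) * sinhp p y ^ (p - 1) * coshp p y)) y :=
      (cosp_hasDerivAt hp hy.1 hy1).mul (coshp_hasDerivAt hp hy.1 hy1.le)
    rw [show deriv (cosp p * coshp p) y = _ from hK.deriv]
    have hkey := key_pow_lt hp hy.1 hy1
    have hC := cosp_pos hp hy.1.le hy1
    have hCh := coshp_pos hp hy.1.le hy1.le
    nlinarith [mul_lt_mul_of_pos_right hkey (mul_pos hC hCh)]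
  have h2 := hanti (left_mem_Icc.mpr h0.le) (right_mem_Icc.mpr h0.le) h0
  simp only [cosp_zero hp, coshp_zero hp, one_mul] at h2
  exact h2

end Lemmas6

section Lemmas7
variable {p : ℝ}

private lemma cross_term_le (hp : 2 ≤ p) {y : ℝ} (h0 : 0 < y) (h1 : y < pipHalf p) :
    sinp p y * ((1 + sinhp p y ^ p) ^ (1/p - 1) * sinhp p y ^ (p - 1) * coshp p y)
      ≤ ((1 - sinp p y ^ p) ^ (1/p - 1) * sinp p y ^ (p - 1) * cosp p y) * sinhp p y := by
  have hS0 := sinp_pos hp h0 h1.le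
  have hSh0 := sinhp_pos' hp h0 h1.le
  have hQ1 := cosp_base_pos hp h0.le h1
  have hQ2 := coshp_base_pos hp h0.le h1.le
  have hkey := key_pow_le hp h0 h1
  -- rewrite powers: a^(p-1) = a^(p-2) * a
  have eS : sinp p y ^ (p-1) = sinp p y ^ (p-2) * sinp p y := by
    rw [show p - 1 = (p-2) + 1 by ring, rpow_add_one hS0.ne']
  have eSh : sinhp p y ^ (p-1) = sinhp p y ^ (p-2) * sinhp p y := by
    rw [show p - 1 = (p-2) + 1 by ring, rpow_add_one hSh0.ne']
  -- absorb cosh into the Q₂-power and cos into the Q₁-power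
  have eQ2 : (1 + sinhp p y ^ p) ^ (1/p - 1) * coshp p y
      = (1 + sinhp p y ^ p) ^ (-((p-2)/p)) := by
    rw [show coshp p y = (1 + sinhp p y ^ p) ^ (1/p : ℝ) from rfl, ← rpow_add hQ2]
    congr 1
    field_simp
    ring
  have eQ1 : (1 - sinp p y ^ p) ^ (1/p - 1) * cosp p y
      = (1 - sinp p y ^ p) ^ (-((p-2)/p)) := by
    rw [show cosp p y = (1 - sinp p y ^ p) ^ (1/p : ℝ) from rfl, ← rpow_add hQ1]
    congr 1
    field_simp
    ring
  calc sinp p y * ((1 + sinhp p y ^ p) ^ (1/p - 1) * sinhp p y ^ (p - 1) * coshp p y)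
      = (sinp p y * sinhp p y) *
          ((1 + sinhp p y ^ p) ^ (-((p-2)/p)) * sinhp p y ^ (p-2)) := by
        rw [eSh, ← eQ2]; ring
    _ ≤ (sinp p y * sinhp p y) *
          ((1 - sinp p y ^ p) ^ (-((p-2)/p)) * sinp p y ^ (p-2)) := by
        apply mul_le_mul_of_nonneg_left hkey (by positivity)
    _ = ((1 - sinp p y ^ p) ^ (1/p - 1) * sinp p y ^ (p - 1) * cosp p y) * sinhp p y := by
        rw [eS, ← eQ1]; ring

private lemma A4 (hp : 2 ≤ p) {x : ℝ} (h0 : 0 < x) (h1 : x < pipHalf p) :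
    cosp p x * sinhp p x + sinp p x * coshp p x < 2 * x := by
  set v : ℝ → ℝ := fun y => 2 * y - (cosp p y * sinhp p y + sinp p y * coshp p y) with hv
  have hcont : ContinuousOn v (Icc 0 x) := by
    apply (continuousOn_const.mul continuousOn_id).sub
    exact ((cosp_continuousOn hp h0.le h1).mul (sinhp_continuousOn' hp h0.le h1.le)).add
      ((sinp_continuousOn hp h0.le h1).mul (coshp_continuousOn hp h0.le h1.le))
  have hmono : StrictMonoOn v (Icc 0 x) := by
    apply strictMonoOn_of_deriv_pos (convex_Icc _ _) hcont
    intro y hy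
    rw [interior_Icc] at hy
    have hy1 : y < pipHalf p := hy.2.trans h1
    have hd : HasDerivAt v
        (2 * 1 - (((-((1 - sinp p y ^ p) ^ (1/p - 1) * sinp p y ^ (p - 1) * cosp p y))
            * sinhp p y + cosp p y * coshp p y)
          + (cosp p y * coshp p y + sinp p y *
            ((1 + sinhp p y ^ p) ^ (1/p - 1) * sinhp p y ^ (p - 1) * coshp p y)))) y := by
      apply (HasDerivAt.const_mul (2:ℝ) (hasDerivAt_id y)).sub
      exact ((cosp_hasDerivAt hp hy.1 hy1).mul (sinhp_hasDerivAt' hp hy.1 hy1.le)).add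
        ((sinp_hasDerivAt hp hy.1 hy1).mul (coshp_hasDerivAt hp hy.1 hy1.le))
    rw [hd.deriv]
    have hcross := cross_term_le hp hy.1 hy1
    have hK := A3 hp hy.1 hy1
    linarith
  have h2 := hmono (left_mem_Icc.mpr h0.le) (right_mem_Icc.mpr h0.le) h0
  have hv0 : v 0 = 0 := by
    simp [hv, sinp_zero hp, sinhp_zero hp]
  rw [hv0] at h2
  simp only [hv] at h2
  linarith

private lemma A5 (hp : 2 ≤ p) {x : ℝ} (h0 : 0 < x) (h1 : x < pipHalf p) :
    sinp p x * sinhp p x < x * x := by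
  set w : ℝ → ℝ := fun y => y * y - sinp p y * sinhp p y with hw
  have hcont : ContinuousOn w (Icc 0 x) := by
    apply (continuousOn_id.mul continuousOn_id).sub
    exact (sinp_continuousOn hp h0.le h1).mul (sinhp_continuousOn' hp h0.le h1.le)
  have hmono : StrictMonoOn w (Icc 0 x) := by
    apply strictMonoOn_of_deriv_pos (convex_Icc _ _) hcont
    intro y hy
    rw [interior_Icc] at hy
    have hy1 : y < pipHalf p := hy.2.trans h1
    have hd : HasDerivAt w
        ((1 * y + y * 1) - (cosp p y * sinhp p y + sinp p y * coshp p y)) y := by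
      apply ((hasDerivAt_id y).mul (hasDerivAt_id y)).sub
      exact (sinp_hasDerivAt hp hy.1 hy1).mul (sinhp_hasDerivAt' hp hy.1 hy1.le)
    rw [hd.deriv]
    have := A4 hp hy.1 hy1
    linarith
  have h2 := hmono (left_mem_Icc.mpr h0.le) (right_mem_Icc.mpr h0.le) h0
  have hw0 : w 0 = 0 := by simp [hw, sinp_zero hp]
  rw [hw0] at h2
  simp only [hw] at h2
  linarith

end Lemmas7

section Lemmas8
variable {p : ℝ}

private lemma tanhp_zero (hp : 2 ≤ p) : tanhp p 0 = 0 := by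
  rw [tanhp, sinhp_zero hp, zero_div]

private lemma tanhp_nonneg (hp : 2 ≤ p) {y : ℝ} (h0 : 0 ≤ y) (h1 : y ≤ pipHalf p) :
    0 ≤ tanhp p y :=
  div_nonneg (sinhp_nonneg' hp h0 h1) (coshp_pos hp h0 h1).le

private lemma tanhp_pos (hp : 2 ≤ p) {y : ℝ} (h0 : 0 < y) (h1 : y ≤ pipHalf p) :
    0 < tanhp p y :=
  div_pos (sinhp_pos' hp h0 h1) (coshp_pos hp h0.le h1)

private lemma sinhp_rpow_id (hp : 2 ≤ p) {a : ℝ} (ha : 0 ≤ a) : (a ^ p) ^ (1/p : ℝ) = a := by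
  rw [← rpow_mul ha]
  rw [mul_one_div, div_self (p_ne hp), rpow_one]

private lemma tanhp_lt_one (hp : 2 ≤ p) {y : ℝ} (h0 : 0 ≤ y) (h1 : y ≤ pipHalf p) :
    tanhp p y < 1 := by
  have hSh := sinhp_nonneg' hp h0 h1
  have hCh := coshp_pos hp h0 h1
  rw [tanhp, div_lt_one hCh]
  calc sinhp p y = (sinhp p y ^ p) ^ (1/p : ℝ) := (sinhp_rpow_id hp hSh).symm
    _ < coshp p y := by
        apply rpow_lt_rpow (rpow_nonneg hSh p) _ (ip_pos hp)
        linarith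

private lemma tanhp_continuousOn (hp : 2 ≤ p) {b : ℝ} (hb0 : 0 ≤ b) (hb : b ≤ pipHalf p) :
    ContinuousOn (tanhp p) (Icc 0 b) := by
  apply (sinhp_continuousOn' hp hb0 hb).div (coshp_continuousOn hp hb0 hb)
  intro y hy
  exact (coshp_pos hp hy.1 (le_trans hy.2 hb)).ne'

private lemma coshp_rpow_p (hp : 2 ≤ p) {y : ℝ} (h0 : 0 ≤ y) (h1 : y ≤ pipHalf p) :
    coshp p y ^ p = 1 + sinhp p y ^ p := by
  rw [show coshp p y = (1 + sinhp p y ^ p) ^ (1/p : ℝ) from rfl]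
  rw [← rpow_mul (coshp_base_pos hp h0 h1).le]
  rw [one_div_mul_cancel (p_ne hp), rpow_one]

private lemma tanhp_hasDerivAt (hp : 2 ≤ p) {y : ℝ} (h0 : 0 < y) (h1 : y < pipHalf p) :
    HasDerivAt (tanhp p) ((1 + sinhp p y ^ p)⁻¹) y := by
  have hSh' := sinhp_hasDerivAt' hp h0 h1.le
  have hCh' := coshp_hasDerivAt hp h0 h1.le
  have hCh := coshp_pos hp h0.le h1.le
  have hQ := coshp_base_pos hp h0.le h1.le
  have hSh0 := sinhp_pos' hp h0 h1.le
  have hd := hSh'.div hCh' hCh.ne'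
  have heq : (coshp p y * coshp p y - sinhp p y *
      ((1 + sinhp p y ^ p) ^ (1/p - 1) * sinhp p y ^ (p - 1) * coshp p y)) / coshp p y ^ 2
      = (1 + sinhp p y ^ p)⁻¹ := by
    have e1 : sinhp p y ^ (p-1) * sinhp p y = sinhp p y ^ p := by
      rw [← rpow_add_one hSh0.ne' (p-1)]
      norm_num
    have e2 : (1 + sinhp p y ^ p) ^ (1/p - 1 : ℝ)
        = coshp p y / (1 + sinhp p y ^ p) := by
      rw [rpow_sub hQ, rpow_one]
      rfl
    rw [e2, sq]
    field_simp
    linear_combination (-1 : ℝ) * e1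
  rw [← heq]
  exact hd

private lemma atker_contAt (hp : 2 ≤ p) {t : ℝ} (h0 : 0 ≤ t) (h1 : t < 1) :
    ContinuousAt (fun t : ℝ => (1 - t ^ p)⁻¹) t := by
  have hbase : ContinuousAt (fun t : ℝ => 1 - t ^ p) t :=
    continuousAt_const.sub (continuous_rpow_const (p_pos hp).le).continuousAt
  exact hbase.inv₀ (asker_base_pos hp h0 h1).ne'

private lemma atker_integrable (hp : 2 ≤ p) {a b : ℝ} (ha : a ∈ Ico (0:ℝ) 1)
    (hb : b ∈ Ico (0:ℝ) 1) :
    IntervalIntegrable (fun t : ℝ => (1 - t ^ p)⁻¹) volume a b := by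
  apply ContinuousOn.intervalIntegrable
  intro t ht
  have h0 : 0 ≤ t := le_trans (le_min ha.1 hb.1) (by simpa [uIcc] using ht.1)
  have h1 : t < 1 := lt_of_le_of_lt (by simpa [uIcc] using ht.2) (max_lt ha.2 hb.2)
  exact (atker_contAt hp h0 h1).continuousWithinAt

private lemma tanh_integral_id (hp : 2 ≤ p) {x : ℝ} (h0 : 0 < x) (h1 : x < pipHalf p) :
    (∫ u in (0:ℝ)..(tanhp p x), (1 - u ^ p)⁻¹) = x := by
  set τ := tanhp p with hτ
  set L : ℝ → ℝ := fun η => ∫ u in (0:ℝ)..η, (1 - u ^ p)⁻¹ with hL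
  have hτx1 : τ x < 1 := tanhp_lt_one hp h0.le h1.le
  have hτx0 : 0 ≤ τ x := tanhp_nonneg hp h0.le h1.le
  -- τ is monotone on [0,x]
  have hτmono : StrictMonoOn τ (Icc 0 x) := by
    apply strictMonoOn_of_deriv_pos (convex_Icc _ _) (tanhp_continuousOn hp h0.le h1.le)
    intro y hy
    rw [interior_Icc] at hy
    rw [(tanhp_hasDerivAt hp hy.1 (hy.2.trans h1)).deriv]
    have := coshp_base_pos hp hy.1.le (le_of_lt (hy.2.trans h1))
    positivity
  have hmapsTo : MapsTo τ (Icc 0 x) (Icc 0 (τ x)) := by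
    intro y hy
    constructor
    · exact tanhp_nonneg hp hy.1 (le_trans hy.2 h1.le)
    · rcases eq_or_lt_of_le hy.2 with h | h
      · rw [h]
      · exact (hτmono hy (right_mem_Icc.mpr h0.le) h).le
  -- continuity of L on [0, τ x]
  have hLcont : ContinuousOn L (Icc 0 (τ x)) := by
    have h := intervalIntegral.continuousOn_primitive_interval (a := 0) (b := τ x) (μ := volume)
      (f := fun u : ℝ => (1 - u ^ p)⁻¹) ?_
    · rw [uIcc_of_le hτx0] at h
      exact h
    · rw [uIcc_of_le hτx0, ← intervalIntegrable_iff_integrableOn_Icc_of_le hτx0]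
      exact atker_integrable hp ⟨le_rfl, zero_lt_one⟩ ⟨hτx0, hτx1⟩
  -- m = L ∘ τ
  have hmcont : ContinuousOn (fun y => L (τ y)) (Icc 0 x) :=
    hLcont.comp (tanhp_continuousOn hp h0.le h1.le) hmapsTo
  have hmderiv : ∀ y ∈ Ioo 0 x, HasDerivAt (fun y => L (τ y)) 1 y := by
    intro y hy
    have hy1 : y < pipHalf p := hy.2.trans h1
    have hτy0 : 0 < τ y := tanhp_pos hp hy.1 hy1.le
    have hτy1 : τ y < 1 := tanhp_lt_one hp hy.1.le hy1.le
    have hLd : HasDerivAt L ((1 - (τ y) ^ p)⁻¹) (τ y) := by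
      apply intervalIntegral.integral_hasDerivAt_right
        (atker_integrable hp ⟨le_rfl, zero_lt_one⟩ ⟨hτy0.le, hτy1⟩)
      · refine ⟨Ioo 0 1, Ioo_mem_nhds hτy0 hτy1, ?_⟩
        refine ContinuousOn.aestronglyMeasurable ?_ measurableSet_Ioo
        intro t ht
        exact (atker_contAt hp ht.1.le ht.2).continuousWithinAt
      · exact atker_contAt hp hτy0.le hτy1
    have hτd := tanhp_hasDerivAt hp hy.1 hy1
    have hcomp := hLd.comp y hτd
    have heq : (1 - τ y ^ p)⁻¹ * (1 + sinhp p y ^ p)⁻¹ = 1 := by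
      have hQ := coshp_base_pos hp hy.1.le hy1.le
      have hCh := coshp_pos hp hy.1.le hy1.le
      have e1 : τ y ^ p = sinhp p y ^ p / (1 + sinhp p y ^ p) := by
        rw [hτ, tanhp, div_rpow (sinhp_nonneg' hp hy.1.le hy1.le) hCh.le]
        rw [coshp_rpow_p hp hy.1.le hy1.le]
      rw [e1]
      have e2 : 1 - sinhp p y ^ p / (1 + sinhp p y ^ p) = (1 + sinhp p y ^ p)⁻¹ := by
        field_simp
        ring
      rw [e2, inv_inv]
      field_simp
    rw [heq] at hcomp
    exact hcomp
  -- FTC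
  have hFTC := intervalIntegral.integral_eq_sub_of_hasDeriv_right_of_le h0.le hmcont
    (fun y hy => (hmderiv y hy).hasDerivWithinAt)
    (_root_.intervalIntegrable_const (c := (1:ℝ)))
  simp only [intervalIntegral.integral_const, smul_eq_mul, mul_one, sub_zero] at hFTC
  have hm0 : L (τ 0) = 0 := by
    rw [hτ, tanhp_zero hp]
    exact intervalIntegral.integral_same
  rw [hm0, sub_zero] at hFTC
  exact hFTC.symm

private lemma tanhp_lt_sinp (hp : 2 ≤ p) {x : ℝ} (h0 : 0 < x) (h1 : x < pipHalf p) :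
    tanhp p x < sinp p x := by
  set s := sinp p x with hs
  have hs0 : 0 < s := sinp_pos hp h0 h1.le
  have hs1 : s < 1 := sinp_lt_one hp h0.le h1
  have hid := tanh_integral_id hp h0 h1
  have hFs : arcsinp p s = x := arcsinp_sinp hp h0.le h1.le
  -- x = arcsinp s < ∫₀ˢ (1-u^p)⁻¹
  have hcomp : arcsinp p s < ∫ u in (0:ℝ)..s, (1 - u ^ p)⁻¹ := by
    have hint1 := asker_integrable hp (left_mem_Icc.mpr zero_le_one) ⟨hs0.le, hs1.le⟩
    have hint2 := atker_integrable hp ⟨le_rfl, zero_lt_one⟩ ⟨hs0.le, hs1⟩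
    have hdiff : 0 < ∫ u in (0:ℝ)..s, ((1 - u ^ p)⁻¹ - (1 - u ^ p) ^ (-(1/p))) := by
      apply intervalIntegral_pos_of_pos_on (hint2.sub hint1) _ hs0
      intro u hu
      have hu1 : u < 1 := hu.2.trans hs1
      have hA0 : 0 < 1 - u ^ p := asker_base_pos hp hu.1.le hu1
      have hA1 : 1 - u ^ p < 1 := by
        have : 0 < u ^ p := rpow_pos_of_pos hu.1 p
        linarith
      have := rpow_lt_rpow_of_exponent_gt hA0 hA1
        (by have := ip_lt_one hp; linarith : (-1:ℝ) < -(1/p))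
      rw [rpow_neg_one] at this
      linarith
    have hsub := intervalIntegral.integral_sub hint2 hint1
    rw [hsub] at hdiff
    have : arcsinp p s = ∫ u in (0:ℝ)..s, (1 - u ^ p) ^ (-(1/p)) := rfl
    linarith [hdiff]
  rw [hFs] at hcomp
  by_contra hcon
  push_neg at hcon  -- s ≤ tanhp p x
  have hτ1 : tanhp p x < 1 := tanhp_lt_one hp h0.le h1.le
  have hLle : (∫ u in (0:ℝ)..s, (1 - u ^ p)⁻¹)
      ≤ ∫ u in (0:ℝ)..(tanhp p x), (1 - u ^ p)⁻¹ := by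
    have hadd := integral_add_adjacent_intervals
      (atker_integrable hp ⟨le_rfl, zero_lt_one⟩ ⟨hs0.le, hs1⟩)
      (atker_integrable hp ⟨hs0.le, hs1⟩ ⟨tanhp_nonneg hp h0.le h1.le, hτ1⟩)
    have hnn : 0 ≤ ∫ u in s..(tanhp p x), (1 - u ^ p)⁻¹ := by
      apply intervalIntegral.integral_nonneg hcon
      intro u hu
      have : 0 < 1 - u ^ p := asker_base_pos hp (le_trans hs0.le hu.1)
        (lt_of_le_of_lt hu.2 hτ1)
      positivity
    linarith
  rw [hid] at hLle
  linarith

end Lemmas8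

section Lemmas9
variable {p : ℝ}

private lemma B5 (hp : 2 ≤ p) {x : ℝ} (h0 : 0 < x) (h1 : x < pipHalf p) :
    x ^ (p+1) < sinp p x * sinhp p x ^ p := by
  have hp1 : (0:ℝ) < p + 1 := by linarith
  have hA0 : 0 < sinhp p x := sinhp_pos' hp h0 h1.le
  have hB0 : 0 < tanhp p x := tanhp_pos hp h0 h1.le
  set A₀ := sinhp p x with hA₀def
  set B₀ := tanhp p x with hB₀def
  set w₁ : ℝ := p/(p+1) with hw₁def
  set w₂ : ℝ := 1/(p+1) with hw₂def
  have hw₁ : 0 < w₁ := by rw [hw₁def]; positivity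
  have hw₂ : 0 < w₂ := by rw [hw₂def]; positivity
  have hw : w₁ + w₂ = 1 := by rw [hw₁def, hw₂def]; field_simp
  -- integrability of the two integrands
  have hChcont : ContinuousOn (coshp p) (Icc 0 x) := coshp_continuousOn hp h0.le h1.le
  have hWcont : ContinuousOn (fun y => (1 + sinhp p y ^ p)⁻¹) (Icc 0 x) := by
    apply ContinuousOn.inv₀
    · apply continuousOn_const.add
      exact (sinhp_continuousOn' hp h0.le h1.le).rpow_const (fun y _ => Or.inr (p_pos hp).le)
    · intro y hy
      exact (coshp_base_pos hp hy.1 (le_trans hy.2 h1.le)).ne'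
  have hChint : IntervalIntegrable (coshp p) volume 0 x := by
    apply ContinuousOn.intervalIntegrable
    rwa [uIcc_of_le h0.le]
  have hWint : IntervalIntegrable (fun y => (1 + sinhp p y ^ p)⁻¹) volume 0 x := by
    apply ContinuousOn.intervalIntegrable
    rwa [uIcc_of_le h0.le]
  -- the two integrals
  have hintCh : (∫ y in (0:ℝ)..x, coshp p y) = A₀ := by
    have hFTC := intervalIntegral.integral_eq_sub_of_hasDeriv_right_of_le h0.le
      (sinhp_continuousOn' hp h0.le h1.le)
      (fun y hy => ((sinhp_hasDerivAt' hp hy.1 (le_of_lt (hy.2.trans h1))).hasDerivWithinAt))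
      hChint
    rw [hFTC, sinhp_zero hp, sub_zero]
  have hintW : (∫ y in (0:ℝ)..x, (1 + sinhp p y ^ p)⁻¹) = B₀ := by
    have hFTC := intervalIntegral.integral_eq_sub_of_hasDeriv_right_of_le h0.le
      (tanhp_continuousOn hp h0.le h1.le)
      (fun y hy => ((tanhp_hasDerivAt hp hy.1 (hy.2.trans h1)).hasDerivWithinAt))
      hWint
    rw [hFTC, tanhp_zero hp, sub_zero]
  -- pointwise Young / AM-GM inequality
  have hpt : ∀ y ∈ Icc 0 x, (A₀ ^ w₁ * B₀ ^ w₂)⁻¹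
      ≤ (w₁/A₀) * coshp p y + (w₂/B₀) * (1 + sinhp p y ^ p)⁻¹ := by
    intro y hy
    have hyX : y ≤ pipHalf p := le_trans hy.2 h1.le
    have hCh : 0 < coshp p y := coshp_pos hp hy.1 hyX
    have hQ : 0 < 1 + sinhp p y ^ p := coshp_base_pos hp hy.1 hyX
    have hgm := Real.geom_mean_le_arith_mean2_weighted hw₁.le hw₂.le
      (div_nonneg hCh.le hA0.le) (div_nonneg (inv_nonneg.mpr hQ.le) hB0.le) hw
    have eL : (coshp p y / A₀) ^ w₁ * ((1 + sinhp p y ^ p)⁻¹ / B₀) ^ w₂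
        = (A₀ ^ w₁ * B₀ ^ w₂)⁻¹ := by
      rw [div_rpow hCh.le hA0.le, div_rpow (inv_nonneg.mpr hQ.le) hB0.le]
      have e1 : coshp p y ^ w₁ = (1 + sinhp p y ^ p) ^ w₂ := by
        rw [show coshp p y = (1 + sinhp p y ^ p) ^ (1/p : ℝ) from rfl, ← rpow_mul hQ.le]
        congr 1
        rw [hw₁def, hw₂def]
        field_simp
      have e2 : ((1 + sinhp p y ^ p)⁻¹) ^ w₂ = ((1 + sinhp p y ^ p) ^ w₂)⁻¹ := by
        rw [inv_rpow hQ.le]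
      rw [e1, e2]
      have hq : (1 + sinhp p y ^ p) ^ w₂ ≠ 0 := (rpow_pos_of_pos hQ _).ne'
      field_simp
    rw [eL] at hgm
    calc (A₀ ^ w₁ * B₀ ^ w₂)⁻¹ ≤ w₁ * (coshp p y / A₀) + w₂ * ((1 + sinhp p y ^ p)⁻¹ / B₀) := hgm
      _ = (w₁/A₀) * coshp p y + (w₂/B₀) * (1 + sinhp p y ^ p)⁻¹ := by ring
  -- integrate
  have hRint : IntervalIntegrable
      (fun y => (w₁/A₀) * coshp p y + (w₂/B₀) * (1 + sinhp p y ^ p)⁻¹) volume 0 x :=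
    (hChint.const_mul _).add (hWint.const_mul _)
  have hmono := intervalIntegral.integral_mono_on h0.le
    (_root_.intervalIntegrable_const (c := (A₀ ^ w₁ * B₀ ^ w₂)⁻¹)) hRint hpt
  rw [intervalIntegral.integral_const] at hmono
  have hintR : (∫ y in (0:ℝ)..x,
      ((w₁/A₀) * coshp p y + (w₂/B₀) * (1 + sinhp p y ^ p)⁻¹)) = 1 := by
    rw [intervalIntegral.integral_add (hChint.const_mul _) (hWint.const_mul _)]
    rw [intervalIntegral.integral_const_mul, intervalIntegral.integral_const_mul]
    rw [hintCh, hintW]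
    field_simp
    exact hw
  rw [hintR] at hmono
  simp only [smul_eq_mul, sub_zero] at hmono
  have hc : 0 < A₀ ^ w₁ * B₀ ^ w₂ :=
    mul_pos (rpow_pos_of_pos hA0 _) (rpow_pos_of_pos hB0 _)
  have hxc : x ≤ A₀ ^ w₁ * B₀ ^ w₂ := by
    rw [← div_eq_mul_inv] at hmono
    exact (div_le_one hc).mp hmono
  have hpow : x ^ (p+1) ≤ (A₀ ^ w₁ * B₀ ^ w₂) ^ (p+1) :=
    rpow_le_rpow h0.le hxc hp1.le
  have hEq : (A₀ ^ w₁ * B₀ ^ w₂) ^ (p+1) = A₀ ^ p * B₀ := by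
    rw [mul_rpow (rpow_nonneg hA0.le _) (rpow_nonneg hB0.le _)]
    rw [← rpow_mul hA0.le, ← rpow_mul hB0.le]
    have e1 : w₁ * (p+1) = p := by rw [hw₁def]; field_simp
    have e2 : w₂ * (p+1) = 1 := by rw [hw₂def]; field_simp
    rw [e1, e2, rpow_one]
  rw [hEq] at hpow
  have hlt : A₀ ^ p * B₀ < A₀ ^ p * sinp p x :=
    mul_lt_mul_of_pos_left (tanhp_lt_sinp hp h0 h1) (rpow_pos_of_pos hA0 p)
  calc x ^ (p+1) ≤ A₀ ^ p * B₀ := hpow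
    _ < A₀ ^ p * sinp p x := hlt
    _ = sinp p x * A₀ ^ p := by ring

end Lemmas9

theorem stmt_2 (p : ℝ) (hp : 2 ≤ p) (x : ℝ) (hx : x ∈ Set.Ioo 0 (pipHalf p)) :
    (x / sinhp p x) ^ p < sinp p x / x ∧ sinp p x / x < x / sinhp p x := by
  obtain ⟨hx0, hx1⟩ := hx
  have hSh : 0 < sinhp p x := sinhp_pos' hp hx0 hx1.le
  have hA := A5 hp hx0 hx1
  have hB := B5 hp hx0 hx1
  constructor
  · rw [div_rpow hx0.le hSh.le, div_lt_div_iff₀ (rpow_pos_of_pos hSh p) hx0]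
    calc x ^ p * x = x ^ (p+1) := (rpow_add_one hx0.ne' p).symm
      _ < sinp p x * sinhp p x ^ p := hB
  · rw [div_lt_div_iff₀ hx0 hSh]
    calc sinp p x * sinhp p x < x * x := hA
      _ = x * x := rfl
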